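/- The generating function Σ_{m≥0} s_m(μ) z^m of the moments s_m(μ) = 1−√(1−r²)·Σ_{k=0}^{⌊m/2⌋−1} C(2k,k)(r²/4)^k for even m and 0 for odd m equals (1 − r²z² − z²√(1−r²)√(1−r²z²)) / ((1−z²)(1−r²z²)), for |z| sufficiently small. -/

import Mathlib

open Real Finset

noncomputable def B4 : ℕ → ℝ := fun k => (Nat.centralBinom k : ℝ) * (4:ℝ)⁻¹ ^ k

lemma B4_zero : B4 0 = 1 := by simp [B4, Nat.centralBinom]

lemma B4_nonneg (k : ℕ) : 0 ≤ B4 k := by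
  apply mul_nonneg (Nat.cast_nonneg _) (by positivity)

lemma B4_rec (k : ℕ) : (2*(k:ℝ)+2) * B4 (k+1) = (2*k+1) * B4 k := by
  have h := Nat.succ_mul_centralBinom_succ k
  have h' : ((k:ℝ)+1) * (Nat.centralBinom (k+1) : ℝ)
      = 2*(2*k+1) * (Nat.centralBinom k : ℝ) := by
    exact_mod_cast congrArg (fun n : ℕ => (n : ℝ)) h
  simp only [B4, pow_succ]
  linear_combination ((4:ℝ)⁻¹ ^ k * (4:ℝ)⁻¹ * 2) * h'

noncomputable def U : ℕ → ℝ := fun n => ∑ i ∈ range (n+1), B4 i * B4 (n - i)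

lemma V_eq (m : ℕ) : ∑ i ∈ range (m+1), 2*(i:ℝ) * (B4 i * B4 (m - i)) = m * U m := by
  have hrefl : ∑ i ∈ range (m+1), 2*((m-i : ℕ):ℝ) * (B4 (m-i) * B4 (m - (m - i)))
      = ∑ i ∈ range (m+1), 2*(i:ℝ) * (B4 i * B4 (m - i)) := by
    have h := Finset.sum_range_reflect (fun i => 2*(i:ℝ) * (B4 i * B4 (m - i))) (m+1)
    simp only [Nat.add_sub_cancel] at h
    exact h
  have key : 2 * (∑ i ∈ range (m+1), 2*(i:ℝ) * (B4 i * B4 (m - i)))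
      = 2 * ((m:ℝ) * U m) := by
    calc 2 * (∑ i ∈ range (m+1), 2*(i:ℝ) * (B4 i * B4 (m - i)))
        = (∑ i ∈ range (m+1), 2*(i:ℝ) * (B4 i * B4 (m - i)))
          + ∑ i ∈ range (m+1), 2*((m-i : ℕ):ℝ) * (B4 (m-i) * B4 (m - (m - i))) := by
          rw [hrefl]; ring
      _ = ∑ i ∈ range (m+1), (2*(i:ℝ) * (B4 i * B4 (m - i))
          + 2*((m-i : ℕ):ℝ) * (B4 (m-i) * B4 (m - (m - i)))) := by
          rw [Finset.sum_add_distrib]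
      _ = ∑ i ∈ range (m+1), 2*(m:ℝ) * (B4 i * B4 (m - i)) := by
          apply Finset.sum_congr rfl
          intro i hi
          have hi' : i ≤ m := by simpa [Nat.lt_succ_iff] using hi
          have h1 : m - (m - i) = i := by omega
          have h2 : ((m - i : ℕ):ℝ) = (m:ℝ) - i := by rw [Nat.cast_sub hi']
          rw [h1, h2]; ring
      _ = 2 * ((m:ℝ) * U m) := by
          rw [U, Finset.mul_sum, Finset.mul_sum]
          apply Finset.sum_congr rfl
          intro i _; ring
  linarith

lemma U_succ (n : ℕ) : U (n+1) = U n := by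
  have key : ∑ i ∈ range (n+1), (2*(i:ℝ)+1) * (B4 i * B4 (n - i))
      = ∑ i ∈ range (n+2), 2*(i:ℝ) * (B4 i * B4 (n + 1 - i)) := by
    rw [Finset.sum_range_succ' (fun i => 2*(i:ℝ) * (B4 i * B4 (n + 1 - i))) (n+1)]
    simp only [Nat.cast_zero, mul_zero, zero_mul, add_zero]
    apply Finset.sum_congr rfl
    intro i hi
    have h1 : n + 1 - (i + 1) = n - i := by omega
    rw [h1]
    have hb := B4_rec i
    push_cast
    linear_combination (-(B4 (n - i))) * hb
  have lhs1 : ∑ i ∈ range (n+1), (2*(i:ℝ)+1) * (B4 i * B4 (n - i))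
      = (n:ℝ) * U n + U n := by
    have : ∑ i ∈ range (n+1), (2*(i:ℝ)+1) * (B4 i * B4 (n - i))
        = ∑ i ∈ range (n+1), (2*(i:ℝ) * (B4 i * B4 (n - i)) + B4 i * B4 (n - i)) := by
      apply Finset.sum_congr rfl; intro i _; ring
    rw [this, Finset.sum_add_distrib, V_eq]
    rfl
  have rhs1 : ∑ i ∈ range (n+2), 2*(i:ℝ) * (B4 i * B4 (n + 1 - i)) = ((n:ℝ)+1) * U (n+1) := by
    have h := V_eq (n+1)
    push_cast at h
    exact h
  have hn1 : ((n:ℝ)+1) ≠ 0 := by positivity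
  have : ((n:ℝ)+1) * U (n+1) = ((n:ℝ)+1) * U n := by
    rw [← rhs1, ← key, lhs1]; ring
  exact mul_left_cancel₀ hn1 this

lemma U_eq_one (n : ℕ) : U n = 1 := by
  induction n with
  | zero => simp [U, B4_zero]
  | succ n ih => rw [U_succ, ih]

lemma centralBinom_convolution (n : ℕ) :
    ∑ i ∈ range (n+1), (Nat.centralBinom i : ℝ) * (Nat.centralBinom (n-i) : ℝ) = 4^n := by
  have h := U_eq_one n
  unfold U B4 at h
  have key : (∑ i ∈ range (n+1), (Nat.centralBinom i : ℝ) * (Nat.centralBinom (n-i) : ℝ))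
      * (4:ℝ)⁻¹^n = 1 := by
    rw [Finset.sum_mul, ← h]
    apply Finset.sum_congr rfl
    intro i hi
    have hi' : i ≤ n := by simpa [Nat.lt_succ_iff] using hi
    have hp : (4:ℝ)⁻¹^i * (4:ℝ)⁻¹^(n-i) = (4:ℝ)⁻¹^n := by
      rw [← pow_add]; congr 1; omega
    linear_combination (-((Nat.centralBinom i : ℝ) * (Nat.centralBinom (n-i) : ℝ))) * hp
  have h4 : ((4:ℝ)⁻¹)^n ≠ 0 := by positivity
  field_simp at key
  rw [div_pow, one_pow] at key
  field_simp at key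
  linarith


lemma centralBinom_le_four_pow (n : ℕ) : Nat.centralBinom n ≤ 4^n := by
  induction n with
  | zero => simp [Nat.centralBinom]
  | succ n ih =>
    have h := Nat.succ_mul_centralBinom_succ n
    have h2 : (n+1) * Nat.centralBinom (n+1) ≤ (n+1) * (4 * Nat.centralBinom n) := by
      rw [h]; nlinarith [Nat.centralBinom_pos n]
    have h3 : Nat.centralBinom (n+1) ≤ 4 * Nat.centralBinom n :=
      Nat.le_of_mul_le_mul_left h2 (Nat.succ_pos n)
    calc Nat.centralBinom (n+1) ≤ 4 * Nat.centralBinom n := h3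
      _ ≤ 4 * 4^n := by omega
      _ = 4^(n+1) := by ring

lemma hasSum_centralBinom {x : ℝ} (hx0 : 0 ≤ x) (hx1 : 4*x < 1) :
    HasSum (fun k => (Nat.centralBinom k : ℝ) * x^k) ((Real.sqrt (1-4*x))⁻¹) := by
  set f : ℕ → ℝ := fun k => (Nat.centralBinom k : ℝ) * x^k with hf
  have hnn : ∀ k, 0 ≤ f k := fun k =>
    mul_nonneg (Nat.cast_nonneg _) (pow_nonneg hx0 _)
  have hle : ∀ k, f k ≤ (4*x)^k := by
    intro k
    have : (Nat.centralBinom k : ℝ) ≤ 4^k := by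
      exact_mod_cast Nat.cast_le.mpr (centralBinom_le_four_pow k)
    calc f k ≤ 4^k * x^k := by
          apply mul_le_mul_of_nonneg_right this (pow_nonneg hx0 _)
      _ = (4*x)^k := (mul_pow _ _ _).symm
  have hsum : Summable f :=
    Summable.of_nonneg_of_le hnn hle
      (summable_geometric_of_lt_one (by positivity) hx1)
  have hnorm : (fun k => ‖f k‖) = f := by
    funext k; exact abs_of_nonneg (hnn k)
  have hnsum : Summable fun k => ‖f k‖ := by rw [hnorm]; exact hsum
  have hCauchy := tsum_mul_tsum_eq_tsum_sum_range_of_summable_norm hnsum hnsum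
  have hinner : ∀ n : ℕ, ∑ k ∈ range (n+1), f k * f (n-k) = (4*x)^n := by
    intro n
    have : ∑ k ∈ range (n+1), f k * f (n-k)
        = ∑ k ∈ range (n+1), ((Nat.centralBinom k : ℝ) * (Nat.centralBinom (n-k) : ℝ)) * x^n := by
      apply Finset.sum_congr rfl
      intro k hk
      have hk' : k ≤ n := by simpa [Nat.lt_succ_iff] using hk
      have hxp : x^k * x^(n-k) = x^n := by rw [← pow_add]; congr 1; omega
      simp only [hf]
      calc (Nat.centralBinom k : ℝ) * x^k * ((Nat.centralBinom (n-k) : ℝ) * x^(n-k))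
          = (Nat.centralBinom k : ℝ) * (Nat.centralBinom (n-k) : ℝ) * (x^k * x^(n-k)) := by ring
        _ = (Nat.centralBinom k : ℝ) * (Nat.centralBinom (n-k) : ℝ) * x^n := by rw [hxp]
    rw [this, ← Finset.sum_mul, centralBinom_convolution, ← mul_pow]
  have h14 : 0 < 1 - 4*x := by linarith
  have hgg : (∑' k, f k) * (∑' k, f k) = (1-4*x)⁻¹ := by
    rw [hCauchy]
    have : (fun n => ∑ k ∈ range (n+1), f k * f (n-k)) = fun n => (4*x)^n := by
      funext n; exact hinner n
    rw [this, tsum_geometric_of_lt_one (by positivity) hx1]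
  have hgpos : 0 < ∑' k, f k := by
    have h0 : f 0 = 1 := by simp [hf, Nat.centralBinom]
    have := Summable.le_tsum hsum 0 (fun j _ => hnn j)
    rw [h0] at this
    linarith
  have hgeq : ∑' k, f k = (Real.sqrt (1-4*x))⁻¹ := by
    have h1 : Real.sqrt ((∑' k, f k) * (∑' k, f k)) = Real.sqrt ((1-4*x)⁻¹) := by rw [hgg]
    rw [Real.sqrt_mul_self hgpos.le, Real.sqrt_inv] at h1
    exact h1
  rw [← hgeq]
  exact hsum.hasSum


theorem konno_moment_generating_function (r : ℝ) (hr0 : 0 < r) (hr1 : r < 1)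
    (s : ℕ → ℝ)
    (hodd : ∀ m : ℕ, s (2 * m + 1) = 0)
    (h0 : s 0 = 1)
    (heven : ∀ m : ℕ, 1 ≤ m →
      s (2 * m) = 1 - Real.sqrt (1 - r^2) *
        ∑ k ∈ Finset.range m, (Nat.choose (2 * k) k : ℝ) * (r^2 / 4) ^ k) :
    ∃ ε > 0, ∀ z : ℝ, |z| < ε →
      HasSum (fun m : ℕ => s m * z ^ m)
        ((1 - r^2 * z^2 - z^2 * Real.sqrt (1 - r^2) * Real.sqrt (1 - r^2 * z^2)) /
          ((1 - z^2) * (1 - r^2 * z^2))) := by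
  refine ⟨1, one_pos, fun z hz => ?_⟩
  set w := z^2 with hwdef
  have hw0 : 0 ≤ w := sq_nonneg z
  have hw1 : w < 1 := by
    have : w = |z|^2 := (sq_abs z).symm
    rw [this]
    exact pow_lt_one₀ (abs_nonneg z) hz (by norm_num)
  have hr2 : r^2 < 1 := by nlinarith
  have hrw1 : r^2 * w < 1 := by nlinarith [sq_nonneg r]
  have h1w : (0:ℝ) < 1 - w := by linarith
  have h1rw : (0:ℝ) < 1 - r^2*w := by linarith
  -- uniform formula for even moments
  have hs : ∀ m : ℕ, s (2*m) = 1 - Real.sqrt (1 - r^2) *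
      ∑ k ∈ Finset.range m, (Nat.choose (2*k) k : ℝ) * (r^2 / 4) ^ k := by
    intro m
    cases m with
    | zero => simpa using h0
    | succ m => exact heven (m+1) (Nat.succ_le_succ (Nat.zero_le m))
  -- the central binomial series
  set A : ℕ → ℝ := fun k => (Nat.centralBinom k : ℝ) * (r^2*w/4)^k with hA
  have hxa0 : (0:ℝ) ≤ r^2*w/4 := by positivity
  have hxa1 : 4*(r^2*w/4) < 1 := by linarith [hrw1]
  have hAsum : HasSum A ((Real.sqrt (1 - r^2*w))⁻¹) := by
    have := hasSum_centralBinom hxa0 hxa1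
    have he : 1 - 4*(r^2*w/4) = 1 - r^2*w := by ring
    rwa [he] at this
  -- the shifted geometric series
  set Bf : ℕ → ℝ := fun l => if l = 0 then 0 else w^l with hBf
  have hBsum : HasSum Bf ((1-w)⁻¹ - 1) := by
    have hg := hasSum_geometric_of_lt_one hw0 hw1
    have hi : HasSum (fun l : ℕ => if l = 0 then (1:ℝ) else 0) 1 := hasSum_ite_eq 0 1
    have := hg.sub hi
    convert this using 1
    · rfl
    funext l
    cases l with
    | zero => simp [hBf]
    | succ l => simp [hBf]
  -- Cauchy product
  have hAnorm : Summable fun k => ‖A k‖ := by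
    have : (fun k => ‖A k‖) = A := by
      funext k
      exact abs_of_nonneg (mul_nonneg (Nat.cast_nonneg _) (pow_nonneg hxa0 _))
    rw [this]; exact hAsum.summable
  have hBnorm : Summable fun l => ‖Bf l‖ := by
    have : (fun l => ‖Bf l‖) = Bf := by
      funext l
      refine abs_of_nonneg ?_
      by_cases h : l = 0 <;> simp [hBf, h, pow_nonneg hw0]
    rw [this]; exact hBsum.summable
  have hProd : HasSum (fun n => ∑ k ∈ range (n+1), A k * Bf (n-k))
      ((Real.sqrt (1 - r^2*w))⁻¹ * ((1-w)⁻¹ - 1)) := by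
    have := hasSum_sum_range_mul_of_summable_norm hAnorm hBnorm
    rwa [hAsum.tsum_eq, hBsum.tsum_eq] at this
  -- geometric
  have hgw : HasSum (fun m : ℕ => w^m) ((1-w)⁻¹) := hasSum_geometric_of_lt_one hw0 hw1
  -- combined even series
  have hkey : HasSum (fun m => s (2*m) * w^m)
      ((1-w)⁻¹ - Real.sqrt (1 - r^2) * ((Real.sqrt (1 - r^2*w))⁻¹ * ((1-w)⁻¹ - 1))) := by
    have H := hgw.sub (hProd.mul_left (Real.sqrt (1 - r^2)))
    convert H using 1
    · rfl
    funext m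
    have hsum_eq : ∑ k ∈ range (m+1), A k * Bf (m-k)
        = (∑ k ∈ Finset.range m, (Nat.choose (2*k) k : ℝ) * (r^2 / 4) ^ k) * w^m := by
      rw [Finset.sum_range_succ]
      have hlast : A m * Bf (m - m) = 0 := by simp [hBf]
      rw [hlast, add_zero, Finset.sum_mul]
      apply Finset.sum_congr rfl
      intro k hk
      have hk' : k < m := Finset.mem_range.mp hk
      have hne : m - k ≠ 0 := by omega
      have hBfe : Bf (m-k) = w^(m-k) := by simp [hBf, hne]
      rw [hBfe, hA]
      have hcb : (Nat.centralBinom k : ℝ) = (Nat.choose (2*k) k : ℝ) := by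
        rw [Nat.centralBinom_eq_two_mul_choose]
      have hpow : (r^2*w/4)^k * w^(m-k) = (r^2/4)^k * w^m := by
        have h1 : (r^2*w/4)^k = (r^2/4)^k * w^k := by
          rw [← mul_pow]; congr 1; ring
        rw [h1, mul_assoc, ← pow_add]
        congr 2
        omega
      rw [mul_assoc, hpow, hcb]
      ring
    rw [hs m, hsum_eq]
    ring
  -- value identity
  have hval : (1-w)⁻¹ - Real.sqrt (1 - r^2) * ((Real.sqrt (1 - r^2*w))⁻¹ * ((1-w)⁻¹ - 1))
      = (1 - r^2 * w - w * Real.sqrt (1 - r^2) * Real.sqrt (1 - r^2 * w)) /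
          ((1 - w) * (1 - r^2 * w)) := by
    set a := Real.sqrt (1 - r^2*w) with ha
    have hapos : 0 < a := Real.sqrt_pos.mpr h1rw
    have ha2 : a^2 = 1 - r^2*w := Real.sq_sqrt h1rw.le
    rw [← ha2]
    field_simp
    ring
  rw [hwdef] at hval
  rw [hval] at hkey
  -- even/odd reduction
  have hinj : Function.Injective (fun m : ℕ => 2*m) := fun a b h => by
    simp only at h; omega
  have hzero : ∀ x ∉ Set.range (fun m : ℕ => 2*m), s x * z^x = 0 := by
    intro x hx
    rcases Nat.even_or_odd x with he | ho
    · obtain ⟨k, hk⟩ := he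
      exact absurd ⟨k, show 2*k = x by omega⟩ hx
    · obtain ⟨k, hk⟩ := ho
      rw [hk, hodd k, zero_mul]
  refine (hinj.hasSum_iff hzero).mp ?_
  have hcomp : ((fun m : ℕ => s m * z^m) ∘ (fun m : ℕ => 2*m))
      = fun m => s (2*m) * w^m := by
    funext m
    simp only [Function.comp_apply, hwdef, ← pow_mul]
  rw [hcomp]
  exact hkey
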